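/- Let W ⊂ GL(h) be a finite subgroup which is generated by the set S of complex reflections it contains, and for each s ∈ S let D_s be the associated operator on Sym(h). Then an element p ∈ Sym(h) is W-invariant (i.e., w(p) = p for all w ∈ W, for the induced action of W on Sym(h)) if and only if D_s(p) = 0 for every complex reflection s ∈ S. -/

import Mathlib

noncomputable section

/-- The symmetry relation on the tensor algebra, whose `RingQuot` is the
symmetric algebra `SymmAlg R M`. -/
inductive SymRel (R : Type*) [CommRing R] (M : Type*) [AddCommGroup M] [Module R M] :
    TensorAlgebra R M → TensorAlgebra R M → Prop
  | comm (x y : M) : SymRel R M (TensorAlgebra.ι R x * TensorAlgebra.ι R y)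
      (TensorAlgebra.ι R y * TensorAlgebra.ι R x)

/-- The symmetric algebra `Sym(M)` of a module, realised as the quotient of the
tensor algebra by the symmetry relation. -/
abbrev SymmAlg (R : Type*) [CommRing R] (M : Type*) [AddCommGroup M] [Module R M] :=
  RingQuot (SymRel R M)

/-- The canonical linear map `M → Sym(M)`. -/
def symι (R : Type*) [CommRing R] (M : Type*) [AddCommGroup M] [Module R M] :
    M →ₗ[R] SymmAlg R M :=
  (RingQuot.mkAlgHom R (SymRel R M)).toLinearMap ∘ₗ TensorAlgebra.ι R

/-- A complex reflection on `h`: an element of `GL(h)` of finite order whose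
fixed subspace is a hyperplane (has codimension one). -/
def IsComplexReflection {h : Type*} [AddCommGroup h] [Module ℂ h] (s : h ≃ₗ[ℂ] h) : Prop :=
  IsOfFinOrder s ∧
    Module.finrank ℂ ↥(LinearMap.ker (s.toLinearMap - LinearMap.id)) + 1 =
      Module.finrank ℂ h


theorem SymmAlg.hom_ext {R M A : Type*} [CommRing R] [AddCommGroup M] [Module R M]
    [Semiring A] [Algebra R A] {f g : SymmAlg R M →ₐ[R] A}
    (w : ∀ x : M, f (symι R M x) = g (symι R M x)) : f = g := by
  apply RingQuot.ringQuot_ext'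
  apply TensorAlgebra.hom_ext
  ext x
  simpa [symι] using w x

theorem SymmAlg.mul_comm' {R M : Type*} [CommRing R] [AddCommGroup M] [Module R M]
    (a b : SymmAlg R M) : a * b = b * a := by
  obtain ⟨x, rfl⟩ := RingQuot.mkAlgHom_surjective R (SymRel R M) a
  obtain ⟨y, rfl⟩ := RingQuot.mkAlgHom_surjective R (SymRel R M) b
  induction x using TensorAlgebra.induction generalizing y with
  | algebraMap r => rw [AlgHom.commutes]; exact (Algebra.commutes r _)
  | ι x =>
    induction y using TensorAlgebra.induction with
    | algebraMap r => rw [AlgHom.commutes]; exact (Algebra.commutes r _).symm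
    | ι y =>
      rw [← map_mul (RingQuot.mkAlgHom R (SymRel R M)),
        ← map_mul (RingQuot.mkAlgHom R (SymRel R M))]
      exact RingQuot.mkAlgHom_rel R (SymRel.comm x y)
    | add y1 y2 h1 h2 => rw [map_add, mul_add, add_mul, h1, h2]
    | mul y1 y2 h1 h2 =>
      rw [map_mul, ← mul_assoc, h1, mul_assoc, h2, ← mul_assoc]
  | add x1 x2 h1 h2 => rw [map_add, mul_add, add_mul, h1, h2]
  | mul x1 x2 h1 h2 =>
    rw [map_mul, mul_assoc, h2, ← mul_assoc, h1, mul_assoc]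

instance SymmAlg.instCommRing {R M : Type*} [CommRing R] [AddCommGroup M] [Module R M] :
    CommRing (SymmAlg R M) :=
  { (inferInstance : Ring (SymmAlg R M)) with mul_comm := SymmAlg.mul_comm' }

section Embed

variable {h : Type*} [AddCommGroup h] [Module ℂ h] [FiniteDimensional ℂ h]

private def bs : Module.Basis (Module.Basis.ofVectorSpaceIndex ℂ h) ℂ h := Module.Basis.ofVectorSpace ℂ h

private def Lmap : h →ₗ[ℂ] MvPolynomial (Module.Basis.ofVectorSpaceIndex ℂ h) ℂ :=
  (bs (h := h)).constr ℂ MvPolynomial.X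

private def Fmap : SymmAlg ℂ h →ₐ[ℂ] MvPolynomial (Module.Basis.ofVectorSpaceIndex ℂ h) ℂ :=
  RingQuot.liftAlgHom ℂ ⟨TensorAlgebra.lift ℂ Lmap, by
    rintro _ _ ⟨x, y⟩
    simp [mul_comm]⟩

private def Gmap : MvPolynomial (Module.Basis.ofVectorSpaceIndex ℂ h) ℂ →ₐ[ℂ] SymmAlg ℂ h :=
  MvPolynomial.aeval fun i => symι ℂ h (bs i)

omit [FiniteDimensional ℂ h] in
theorem Fmap_symι (x : h) : Fmap (symι ℂ h x) = Lmap x := by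
  simp [Fmap, symι, RingQuot.liftAlgHom_mkAlgHom_apply]

omit [FiniteDimensional ℂ h] in
theorem Gmap_Fmap (a : SymmAlg ℂ h) : Gmap (Fmap a) = a := by
  have hL : ((Gmap.toLinearMap.comp (Lmap (h := h))) : h →ₗ[ℂ] SymmAlg ℂ h) = symι ℂ h := by
    apply (bs (h := h)).ext
    intro i
    rw [LinearMap.comp_apply, AlgHom.toLinearMap_apply, Lmap, Module.Basis.constr_basis, Gmap,
      MvPolynomial.aeval_X]
  have : (Gmap.comp Fmap : SymmAlg ℂ h →ₐ[ℂ] SymmAlg ℂ h) = AlgHom.id ℂ _ := by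
    apply SymmAlg.hom_ext
    intro x
    simp only [AlgHom.coe_comp, Function.comp_apply, Fmap_symι, AlgHom.coe_id, id_eq]
    exact LinearMap.congr_fun hL x
  exact AlgHom.congr_fun this a

omit [FiniteDimensional ℂ h] in
theorem Fmap_injective : Function.Injective (Fmap (h := h)) := by
  intro a b hab
  rw [← Gmap_Fmap a, ← Gmap_Fmap b, hab]

omit [FiniteDimensional ℂ h] in
theorem Lmap_ne_zero {a : h} (ha : a ≠ 0) : Lmap a ≠ 0 := by
  classical
  obtain ⟨i, hi⟩ : ∃ i, (bs (h := h)).coord i a ≠ 0 := by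
    by_contra hc
    push_neg at hc
    apply ha
    apply (bs (h := h)).repr.injective
    ext i
    simpa [Module.Basis.coord] using hc i
  intro hL
  have key : ((MvPolynomial.aeval (Pi.single i 1 :
      Module.Basis.ofVectorSpaceIndex ℂ h → ℂ)).toLinearMap.comp (Lmap (h := h)))
      = (bs (h := h)).coord i := by
    apply (bs (h := h)).ext
    intro j
    rw [LinearMap.comp_apply, AlgHom.toLinearMap_apply, Lmap, Module.Basis.constr_basis,
      MvPolynomial.aeval_X, Module.Basis.coord_apply, Module.Basis.repr_self]
    rw [Pi.single_apply, Finsupp.single_apply]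
  apply hi
  rw [← key]
  simp [hL]

theorem symι_mul_cancel {a : h} (ha : a ≠ 0) {p : SymmAlg ℂ h}
    (hp : p * symι ℂ h a = 0) : p = 0 := by
  have h0 : Fmap p * Lmap a = 0 := by
    rw [← Fmap_symι, ← map_mul, hp, map_zero]
  rcases mul_eq_zero.mp h0 with h1 | h2
  · exact Fmap_injective (by rw [h1, map_zero])
  · exact absurd h2 (Lmap_ne_zero ha)

end Embed


theorem crefl_apply {h : Type*} [AddCommGroup h] [Module ℂ h] [FiniteDimensional ℂ h]
    (s : h ≃ₗ[ℂ] h) (hs : IsComplexReflection s)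
    (a : h) (z : ℂ) (f : Module.Dual ℂ h) (e : ℂ)
    (hz : z ≠ 1) (hsa : s a = z • a)
    (hf : f ≠ 0) (he : e ≠ 1) (hfs : ∀ v, f (s.symm v) = e * f v)
    (hfa : f a ≠ 0) (x : h) :
    s x = x - ((1 - z) / f a * f x) • a := by
  obtain ⟨v0, hv0⟩ : ∃ v, f v ≠ 0 := by
    by_contra hc
    push_neg at hc
    exact hf (by ext v; simpa using hc v)
  have hrange : LinearMap.range f = ⊤ := by
    rw [LinearMap.range_eq_top]
    intro c
    refine ⟨(c / f v0) • v0, ?_⟩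
    simp [map_smul]
    field_simp
  have hrank_f : Module.finrank ℂ (LinearMap.ker f) + 1 = Module.finrank ℂ h := by
    have h1 := LinearMap.finrank_range_add_finrank_ker f
    rw [hrange] at h1
    simp only [finrank_top, Module.finrank_self] at h1
    omega
  have hker : LinearMap.ker (s.toLinearMap - LinearMap.id) = LinearMap.ker f := by
    have hle : LinearMap.ker (s.toLinearMap - LinearMap.id) ≤ LinearMap.ker f := by
      intro v hv
      have hsv : s v = v := by
        have h2 := LinearMap.mem_ker.mp hv
        simp only [LinearMap.sub_apply, LinearMap.id_apply, LinearEquiv.coe_coe] at h2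
        exact sub_eq_zero.mp h2
      have h1 : f v = e * f v := by
        have h3 := hfs (s v)
        rwa [LinearEquiv.symm_apply_apply, hsv] at h3
      have h4 : (1 - e) * f v = 0 := by
        rw [sub_mul, one_mul, sub_eq_zero]
        exact h1
      rw [LinearMap.mem_ker]
      exact (mul_eq_zero.mp h4).resolve_left (sub_ne_zero.mpr (Ne.symm he))
    refine Submodule.eq_of_le_of_finrank_eq hle ?_
    have h5 := hs.2
    omega
  have hy : s (x - (f x / f a) • a) = x - (f x / f a) • a := by
    have hmem : x - (f x / f a) • a ∈ LinearMap.ker f := by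
      rw [LinearMap.mem_ker, map_sub, map_smul]
      rw [smul_eq_mul, div_mul_cancel₀ _ hfa, sub_self]
    rw [← hker, LinearMap.mem_ker] at hmem
    simp only [LinearMap.sub_apply, LinearMap.id_apply, LinearEquiv.coe_coe] at hmem
    exact sub_eq_zero.mp hmem
  have hx : x = (x - (f x / f a) • a) + (f x / f a) • a := by abel
  have hcalc : s x = (x - (f x / f a) • a) + (f x / f a) • (z • a) := by
    conv_lhs => rw [hx]
    rw [map_add, hy, map_smul, hsa]
  rw [hcalc, smul_smul]
  match_scalars
  · ring
  · field_simp
    ring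

/-- for a finite complex reflection group `W ⊆ GL(h)`, an element
of `Sym(h)` is `W`-invariant if and only if it is killed by every operator
`D_s`, `s` a complex reflection of `W`. -/
theorem invariant_iff_all_twisted_derivations_zero
    {h : Type*} [AddCommGroup h] [Module ℂ h] [FiniteDimensional ℂ h]
    -- `W` is a finite subgroup of `GL(h)` generated by the set `S` of complex
    -- reflections it contains:
    (W : Subgroup (h ≃ₗ[ℂ] h)) [Finite ↥W]
    (S : Set (h ≃ₗ[ℂ] h))
    (hS : S = {s : h ≃ₗ[ℂ] h | s ∈ W ∧ IsComplexReflection s})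
    (hgen : Subgroup.closure S = W)
    -- for each `s ∈ S`: eigenvector `α s` of eigenvalue `ζ s ≠ 1`, and dual
    -- eigenvector `αv s` of the contragredient action of eigenvalue `η s ≠ 1`:
    (α : (h ≃ₗ[ℂ] h) → h) (ζ : (h ≃ₗ[ℂ] h) → ℂ)
    (αv : (h ≃ₗ[ℂ] h) → Module.Dual ℂ h) (η : (h ≃ₗ[ℂ] h) → ℂ)
    (hα : ∀ s ∈ S, α s ≠ 0 ∧ ζ s ≠ 1 ∧ s (α s) = ζ s • α s)
    (hαv : ∀ s ∈ S, αv s ≠ 0 ∧ η s ≠ 1 ∧ (∀ v : h, αv s (s.symm v) = η s * αv s v))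
    (hpair : ∀ s ∈ S, αv s (α s) ≠ 0)
    -- for each `s ∈ S`, `D s` is the twisted-derivation operator attached to `s`:
    (D : (h ≃ₗ[ℂ] h) → (SymmAlg ℂ h →ₗ[ℂ] SymmAlg ℂ h))
    (hD1 : ∀ s ∈ S, D s 1 = 0)
    (hDι : ∀ s ∈ S, ∀ x : h, D s (symι ℂ h x) = αv s x • 1)
    (hDmul : ∀ s ∈ S, ∀ p q : SymmAlg ℂ h,
      D s (p * q) =
        D s p * q + p * D s q - ((1 - ζ s) / αv s (α s)) • (D s p * D s q * symι ℂ h (α s)))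
    -- `act w` is the algebra automorphism of `Sym(h)` induced by `w ∈ W`:
    (act : ↥W → (SymmAlg ℂ h →ₐ[ℂ] SymmAlg ℂ h))
    (hact : ∀ (w : ↥W) (x : h), act w (symι ℂ h x) = symι ℂ h ((w : h ≃ₗ[ℂ] h) x)) :
    ∀ p : SymmAlg ℂ h, (∀ w : ↥W, act w p = p) ↔ (∀ s ∈ S, D s p = 0) := by
  intro p
  classical
  have hact_comp : ∀ (u v : ↥W) (q : SymmAlg ℂ h), act (u * v) q = act u (act v q) := by
    intro u v
    have hcomp : act (u * v) = (act u).comp (act v) := by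
      apply SymmAlg.hom_ext
      intro x
      simp only [hact, AlgHom.comp_apply]
      rfl
    intro q
    rw [hcomp]
    rfl
  have hact_one : ∀ q : SymmAlg ℂ h, act 1 q = q := by
    have hone : act 1 = AlgHom.id ℂ _ := by
      apply SymmAlg.hom_ext
      intro x
      simp [hact]
    intro q
    rw [hone]
    rfl
  have key : ∀ s (hsS : s ∈ S) (hsW : s ∈ W) (q : SymmAlg ℂ h),
      act ⟨s, hsW⟩ q = q - ((1 - ζ s) / αv s (α s)) • (D s q * symι ℂ h (α s)) := by
    intro s hsS hsW
    obtain ⟨ha0, hz1, hsa⟩ := hα s hsS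
    obtain ⟨hf0, he1, hfs⟩ := hαv s hsS
    have hfa := hpair s hsS
    have hmemS : s ∈ {s : h ≃ₗ[ℂ] h | s ∈ W ∧ IsComplexReflection s} := hS ▸ hsS
    have hrefl := crefl_apply s hmemS.2 (α s) (ζ s) (αv s) (η s) hz1 hsa hf0 he1 hfs hfa
    set c : ℂ := (1 - ζ s) / αv s (α s) with hc
    let T : SymmAlg ℂ h →ₐ[ℂ] SymmAlg ℂ h :=
      { toFun := fun q => q - c • (D s q * symι ℂ h (α s))
        map_one' := by simp [hD1 s hsS]
        map_mul' := by
          intro q r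
          simp only [hDmul s hsS, ← hc]
          simp only [smul_sub, smul_add, Algebra.smul_def, map_mul]
          ring
        map_zero' := by simp
        map_add' := by
          intro q r
          simp only [map_add]
          simp only [Algebra.smul_def, map_mul]
          ring
        commutes' := by
          intro r
          have hDr : D s (algebraMap ℂ (SymmAlg ℂ h) r) = 0 := by
            rw [Algebra.algebraMap_eq_smul_one, map_smul, hD1 s hsS, smul_zero]
          simp [hDr] }
    have hT : T = act ⟨s, hsW⟩ := by
      apply SymmAlg.hom_ext
      intro x
      show symι ℂ h x - c • (D s (symι ℂ h x) * symι ℂ h (α s)) = _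
      rw [hDι s hsS, hact, hrefl x, map_sub, map_smul, smul_mul_assoc, one_mul, smul_smul]
    intro q
    rw [← hT]
    rfl
  constructor
  · intro hinv s hsS
    have hsW : s ∈ W := (show s ∈ {s : h ≃ₗ[ℂ] h | s ∈ W ∧ IsComplexReflection s}
      from hS ▸ hsS).1
    have h1 := key s hsS hsW p
    rw [hinv ⟨s, hsW⟩] at h1
    have h2 : ((1 - ζ s) / αv s (α s)) • (D s p * symι ℂ h (α s)) = 0 :=
      sub_eq_self.mp h1.symm
    have hcne : (1 - ζ s) / αv s (α s) ≠ 0 :=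
      div_ne_zero (sub_ne_zero.mpr (Ne.symm (hα s hsS).2.1)) (hpair s hsS)
    have h3 : D s p * symι ℂ h (α s) = 0 := by
      rcases smul_eq_zero.mp h2 with h | h
      · exact absurd h hcne
      · exact h
    exact symι_mul_cancel (hα s hsS).1 h3
  · intro hD0
    let K : Subgroup (h ≃ₗ[ℂ] h) :=
      { carrier := {g | ∃ hg : g ∈ W, act ⟨g, hg⟩ p = p}
        one_mem' := ⟨W.one_mem, hact_one p⟩
        mul_mem' := by
          rintro g g' ⟨hg, hgp⟩ ⟨hg', hgp'⟩
          refine ⟨W.mul_mem hg hg', ?_⟩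
          have heq : (⟨g * g', W.mul_mem hg hg'⟩ : ↥W) = ⟨g, hg⟩ * ⟨g', hg'⟩ := rfl
          rw [heq, hact_comp, hgp', hgp]
        inv_mem' := by
          rintro g ⟨hg, hgp⟩
          refine ⟨W.inv_mem hg, ?_⟩
          have hmul : (⟨g⁻¹, W.inv_mem hg⟩ : ↥W) * ⟨g, hg⟩ = 1 :=
            Subtype.ext (inv_mul_cancel g)
          calc act ⟨g⁻¹, W.inv_mem hg⟩ p
              = act ⟨g⁻¹, W.inv_mem hg⟩ (act ⟨g, hg⟩ p) := by rw [hgp]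
            _ = act ((⟨g⁻¹, W.inv_mem hg⟩ : ↥W) * ⟨g, hg⟩) p := (hact_comp _ _ p).symm
            _ = act 1 p := by rw [hmul]
            _ = p := hact_one p }
    have hSK : S ⊆ K := by
      intro s hsS
      have hsW : s ∈ W := (show s ∈ {s : h ≃ₗ[ℂ] h | s ∈ W ∧ IsComplexReflection s}
        from hS ▸ hsS).1
      refine ⟨hsW, ?_⟩
      rw [key s hsS hsW p, hD0 s hsS, zero_mul, smul_zero, sub_zero]
    have hWK : W ≤ K := by
      rw [← hgen]
      exact (Subgroup.closure_le K).mpr hSK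
    intro w
    obtain ⟨hw, hwp⟩ := hWK w.2
    have hww : (⟨(w : h ≃ₗ[ℂ] h), hw⟩ : ↥W) = w := rfl
    rw [← hww]
    exact hwp
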